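/- arXiv:1802.01383 — 2 statements merged into one kernel-verified Lean document; each statement's English description precedes it below -/
import Mathlib

section
/- Let n ≥ 3. In VB_n the following identities hold for all m, i ∈ ℤ and ε ∈ {0,1}: (1) σ_1^m a_i σ_1^{−m} = a_{i+m}, σ_1^m b_{i,ε} σ_1^{−m} = b_{i+m,ε}, σ_1^m f_{i,ε} σ_1^{−m} = f_{i+m,ε}, and, when n ≥ 4 and 3 ≤ l ≤ n−1, σ_1^m c_l σ_1^{−m} = c_l and σ_1^m g_{i,l} σ_1^{−m} = g_{i+m,l}; (2) ρ_1 a_0 ρ_1 = a_0^{−1}, ρ_1 b_{0,0} ρ_1 = b_{0,1} a_0^{−1}, ρ_1 b_{0,1} ρ_1 = b_{0,0} a_0^{−1}, ρ_1 b_{1,0} ρ_1 = a_0 b_{1,1} a_1^{−1} a_0^{−1}, ρ_1 b_{2,0} ρ_1 = a_0 a_1 b_{2,1} a_2^{−1} a_1^{−1} a_0^{−1}; (3) ρ_1 f_{0,0} ρ_1 = f_{0,1}, ρ_1 f_{0,1} ρ_1 = f_{0,0}, ρ_1 f_{1,0} ρ_1 = a_0 f_{1,1} a_0^{−1}, ρ_1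 f_{1,1} ρ_1 = a_0 f_{1,0} a_0^{−1}, and, when n ≥ 4 and 3 ≤ l ≤ n−1, ρ_1 c_l ρ_1 = c_l a_0^{−1}; (4) when n ≥ 4 and 3 ≤ l ≤ n−1, ρ_1 g_{0,l} ρ_1 = g_{0,l} and ρ_1 g_{1,l} ρ_1 = a_0 g_{1,l} a_0^{−1}. -/
/-!
Common setup: the virtual braid group `VB n` and the welded braid group `WB n`
as presented groups, together with the distinguished elements of their
commutator subgroups used in the paper
"Commutator subgroups of virtual and welded braid groups".

Generators: for `i : Fin (n-1)`, `Sum.inl i` represents σ_{i+1} and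
`Sum.inr i` represents ρ_{i+1}.
-/

/-- The generating set of `VB n` (and `WB n`). -/
abbrev VBGen (n : ℕ) := (Fin (n - 1)) ⊕ (Fin (n - 1))

/-- The free group letter σ_i, for `1 ≤ i ≤ n-1` (junk value `1` otherwise). -/
def fσ (n i : ℕ) : FreeGroup (VBGen n) :=
  if h : 1 ≤ i ∧ i - 1 < n - 1 then FreeGroup.of (Sum.inl ⟨i - 1, h.2⟩) else 1

/-- The free group letter ρ_i, for `1 ≤ i ≤ n-1` (junk value `1` otherwise). -/
def fρ (n i : ℕ) : FreeGroup (VBGen n) :=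
  if h : 1 ≤ i ∧ i - 1 < n - 1 then FreeGroup.of (Sum.inr ⟨i - 1, h.2⟩) else 1

/-- The defining relators of the virtual braid group `VB n`. -/
def vbRels (n : ℕ) : Set (FreeGroup (VBGen n)) :=
  {r | ∃ i j, 1 ≤ i ∧ i + 2 ≤ j ∧ j ≤ n - 1 ∧
      (r = fσ n i * fσ n j * (fσ n i)⁻¹ * (fσ n j)⁻¹ ∨
       r = fρ n i * fρ n j * (fρ n i)⁻¹ * (fρ n j)⁻¹ ∨
       r = fσ n i * fρ n j * (fσ n i)⁻¹ * (fρ n j)⁻¹ ∨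
       r = fσ n j * fρ n i * (fσ n j)⁻¹ * (fρ n i)⁻¹)} ∪
  {r | ∃ i, 1 ≤ i ∧ i + 1 ≤ n - 1 ∧
      (r = fσ n i * fσ n (i+1) * fσ n i * (fσ n (i+1))⁻¹ * (fσ n i)⁻¹ * (fσ n (i+1))⁻¹ ∨
       r = fρ n i * fρ n (i+1) * fρ n i * (fρ n (i+1))⁻¹ * (fρ n i)⁻¹ * (fρ n (i+1))⁻¹ ∨
       r = fρ n i * fρ n (i+1) * fσ n i * (fρ n (i+1))⁻¹ * (fρ n i)⁻¹ * (fσ n (i+1))⁻¹)} ∪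
  {r | ∃ i, 1 ≤ i ∧ i ≤ n - 1 ∧ r = fρ n i * fρ n i}

/-- The virtual braid group on `n` strands. -/
abbrev VB (n : ℕ) := PresentedGroup (vbRels n)

/-- The generator σ_i of `VB n`. -/
def vσ (n i : ℕ) : VB n := PresentedGroup.mk (vbRels n) (fσ n i)

/-- The generator ρ_i of `VB n`. -/
def vρ (n i : ℕ) : VB n := PresentedGroup.mk (vbRels n) (fρ n i)

/-- a_m = σ_1^m (ρ_1 σ_1 ρ_1 σ_1⁻¹) σ_1^{-m}. -/
def va (n : ℕ) (m : ℤ) : VB n :=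
  (vσ n 1) ^ m * (vρ n 1 * vσ n 1 * vρ n 1 * (vσ n 1)⁻¹) * (vσ n 1) ^ (-m)

/-- b_{m,ε} = σ_1^m (ρ_1^ε σ_2 ρ_1^ε σ_1⁻¹) σ_1^{-m}. -/
def vb (n : ℕ) (m : ℤ) (ε : ℕ) : VB n :=
  (vσ n 1) ^ m * ((vρ n 1) ^ ε * vσ n 2 * (vρ n 1) ^ ε * (vσ n 1)⁻¹) * (vσ n 1) ^ (-m)

/-- c_l = σ_l σ_1⁻¹. -/
def vc (n l : ℕ) : VB n := vσ n l * (vσ n 1)⁻¹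

/-- f_{m,ε} = σ_1^m (ρ_1^ε ρ_2 ρ_1^{ε+1}) σ_1^{-m}; `f_m` is `vf n m 0`. -/
def vf (n : ℕ) (m : ℤ) (ε : ℕ) : VB n :=
  (vσ n 1) ^ m * ((vρ n 1) ^ ε * vρ n 2 * (vρ n 1) ^ (ε + 1)) * (vσ n 1) ^ (-m)

/-- g_{m,l} = σ_1^m (ρ_l ρ_1) σ_1^{-m}. -/
def vg (n : ℕ) (m : ℤ) (l : ℕ) : VB n :=
  (vσ n 1) ^ m * (vρ n l * vρ n 1) * (vσ n 1) ^ (-m)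

/-- The additional relators ρ_i σ_{i+1} σ_i (ρ_{i+1})⁻¹ σ_i⁻¹ σ_{i+1}⁻¹ of the
welded braid group. -/
def wbExtraRels (n : ℕ) : Set (FreeGroup (VBGen n)) :=
  {r | ∃ i, 1 ≤ i ∧ i + 1 ≤ n - 1 ∧
      r = fρ n i * fσ n (i+1) * fσ n i * (fρ n (i+1))⁻¹ * (fσ n i)⁻¹ * (fσ n (i+1))⁻¹}

/-- The defining relators of the welded braid group `WB n`. -/
def wbRels (n : ℕ) : Set (FreeGroup (VBGen n)) := vbRels n ∪ wbExtraRels n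

/-- The welded braid group on `n` strands. -/
abbrev WB (n : ℕ) := PresentedGroup (wbRels n)

/-- The generator σ_i of `WB n`. -/
def wσ (n i : ℕ) : WB n := PresentedGroup.mk (wbRels n) (fσ n i)

/-- The generator ρ_i of `WB n`. -/
def wρ (n i : ℕ) : WB n := PresentedGroup.mk (wbRels n) (fρ n i)

/-- a_m in `WB n`. -/
def wa (n : ℕ) (m : ℤ) : WB n :=
  (wσ n 1) ^ m * (wρ n 1 * wσ n 1 * wρ n 1 * (wσ n 1)⁻¹) * (wσ n 1) ^ (-m)

/-- f_{m,ε} in `WB n`; `f_m` is `wf n m 0`. -/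
def wf (n : ℕ) (m : ℤ) (ε : ℕ) : WB n :=
  (wσ n 1) ^ m * ((wρ n 1) ^ ε * wρ n 2 * (wρ n 1) ^ (ε + 1)) * (wσ n 1) ^ (-m)

/-- c_l in `WB n`. -/
def wc (n l : ℕ) : WB n := wσ n l * (wσ n 1)⁻¹

/-- g_{m,l} in `WB n`. -/
def wg (n : ℕ) (m : ℤ) (l : ℕ) : WB n :=
  (wσ n 1) ^ m * (wρ n l * wρ n 1) * (wσ n 1) ^ (-m)


section Aux

private theorem vbrel_one {n : ℕ} {r : FreeGroup (VBGen n)} (h : r ∈ vbRels n) :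
    PresentedGroup.mk (vbRels n) r = 1 :=
  (QuotientGroup.eq_one_iff _).mpr (Subgroup.subset_normalClosure h)

private theorem vb_comm {n : ℕ} {x y : FreeGroup (VBGen n)}
    (h : x * y * x⁻¹ * y⁻¹ ∈ vbRels n) :
    PresentedGroup.mk (vbRels n) x * PresentedGroup.mk (vbRels n) y =
      PresentedGroup.mk (vbRels n) y * PresentedGroup.mk (vbRels n) x := by
  have h1 : PresentedGroup.mk (vbRels n) x * PresentedGroup.mk (vbRels n) y *
      (PresentedGroup.mk (vbRels n) x)⁻¹ * (PresentedGroup.mk (vbRels n) y)⁻¹ = 1 := by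
    simpa [map_mul, map_inv] using vbrel_one h
  calc PresentedGroup.mk (vbRels n) x * PresentedGroup.mk (vbRels n) y
      = (PresentedGroup.mk (vbRels n) x * PresentedGroup.mk (vbRels n) y *
          (PresentedGroup.mk (vbRels n) x)⁻¹ * (PresentedGroup.mk (vbRels n) y)⁻¹) *
        (PresentedGroup.mk (vbRels n) y * PresentedGroup.mk (vbRels n) x) := by group
    _ = _ := by rw [h1, one_mul]

private theorem vρ1_sq {n : ℕ} (hn : 2 ≤ n) : vρ n 1 * vρ n 1 = 1 := by
  have h : fρ n 1 * fρ n 1 ∈ vbRels n := Or.inr ⟨1, le_refl 1, by omega, rfl⟩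
  simpa [vρ, map_mul] using vbrel_one h

private theorem vσ1_σl_comm {n l : ℕ} (h3 : 3 ≤ l) (hl : l ≤ n - 1) :
    vσ n 1 * vσ n l = vσ n l * vσ n 1 :=
  vb_comm (Or.inl (Or.inl ⟨1, l, le_refl 1, by omega, hl, Or.inl rfl⟩))

private theorem vρ1_ρl_comm {n l : ℕ} (h3 : 3 ≤ l) (hl : l ≤ n - 1) :
    vρ n 1 * vρ n l = vρ n l * vρ n 1 :=
  vb_comm (Or.inl (Or.inl ⟨1, l, le_refl 1, by omega, hl, Or.inr (Or.inl rfl)⟩))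

private theorem vσl_ρ1_comm {n l : ℕ} (h3 : 3 ≤ l) (hl : l ≤ n - 1) :
    vσ n l * vρ n 1 = vρ n 1 * vσ n l :=
  vb_comm (Or.inl (Or.inl ⟨1, l, le_refl 1, by omega, hl, Or.inr (Or.inr (Or.inr rfl))⟩))

end Aux

/-- the conjugation rules of Lemma 1 in `VB_n`, `n ≥ 3`. -/
theorem VB_conjugation_rules (n : ℕ) (hn : 3 ≤ n) :
    (∀ m i : ℤ, (vσ n 1) ^ m * va n i * (vσ n 1) ^ (-m) = va n (i + m)) ∧
    (∀ m i : ℤ, ∀ ε : ℕ, ε ≤ 1 →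
      (vσ n 1) ^ m * vb n i ε * (vσ n 1) ^ (-m) = vb n (i + m) ε) ∧
    (∀ m i : ℤ, ∀ ε : ℕ, ε ≤ 1 →
      (vσ n 1) ^ m * vf n i ε * (vσ n 1) ^ (-m) = vf n (i + m) ε) ∧
    (4 ≤ n → ∀ l : ℕ, 3 ≤ l → l ≤ n - 1 →
      (∀ m : ℤ, (vσ n 1) ^ m * vc n l * (vσ n 1) ^ (-m) = vc n l) ∧
      (∀ m i : ℤ, (vσ n 1) ^ m * vg n i l * (vσ n 1) ^ (-m) = vg n (i + m) l)) ∧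
    vρ n 1 * va n 0 * vρ n 1 = (va n 0)⁻¹ ∧
    vρ n 1 * vb n 0 0 * vρ n 1 = vb n 0 1 * (va n 0)⁻¹ ∧
    vρ n 1 * vb n 0 1 * vρ n 1 = vb n 0 0 * (va n 0)⁻¹ ∧
    vρ n 1 * vb n 1 0 * vρ n 1 = va n 0 * vb n 1 1 * (va n 1)⁻¹ * (va n 0)⁻¹ ∧
    vρ n 1 * vb n 2 0 * vρ n 1 =
      va n 0 * va n 1 * vb n 2 1 * (va n 2)⁻¹ * (va n 1)⁻¹ * (va n 0)⁻¹ ∧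
    vρ n 1 * vf n 0 0 * vρ n 1 = vf n 0 1 ∧
    vρ n 1 * vf n 0 1 * vρ n 1 = vf n 0 0 ∧
    vρ n 1 * vf n 1 0 * vρ n 1 = va n 0 * vf n 1 1 * (va n 0)⁻¹ ∧
    vρ n 1 * vf n 1 1 * vρ n 1 = va n 0 * vf n 1 0 * (va n 0)⁻¹ ∧
    (4 ≤ n → ∀ l : ℕ, 3 ≤ l → l ≤ n - 1 →
      vρ n 1 * vc n l * vρ n 1 = vc n l * (va n 0)⁻¹ ∧
      vρ n 1 * vg n 0 l * vρ n 1 = vg n 0 l ∧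
      vρ n 1 * vg n 1 l * vρ n 1 = va n 0 * vg n 1 l * (va n 0)⁻¹) := by
  have hr : vρ n 1 * vρ n 1 = 1 := vρ1_sq (by omega)
  have hri : (vρ n 1)⁻¹ = vρ n 1 := inv_eq_of_mul_eq_one_right hr
  have hr1 : ∀ x : VB n, vρ n 1 * (vρ n 1 * x) = x := by
    intro x; rw [← mul_assoc, hr, one_mul]
  refine ⟨?_, ?_, ?_, ?_, ?_, ?_, ?_, ?_, ?_, ?_, ?_, ?_, ?_, ?_⟩
  · intro m i; unfold va; group
  · intro m i ε hε; interval_cases ε <;> (unfold vb; group)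
  · intro m i ε hε; interval_cases ε <;> (unfold vf; group)
  · intro h4 l h3 hl
    have hc : Commute (vσ n 1) (vσ n l) := vσ1_σl_comm h3 hl
    constructor
    · intro m
      have h2 : Commute ((vσ n 1) ^ m) (vσ n l * (vσ n 1)⁻¹) :=
        ((hc.zpow_left m).mul_right (((Commute.refl (vσ n 1)).zpow_left m).inv_right))
      rw [vc, h2.eq, mul_assoc, ← zpow_add, add_neg_cancel, zpow_zero, mul_one]
    · intro m i; unfold vg; group
  · simp only [va, zpow_zero, neg_zero, one_mul, mul_one, mul_inv_rev, inv_inv, hri,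
      mul_assoc, hr1, hr, mul_inv_cancel_left, inv_mul_cancel_left]
  · simp only [va, vb, zpow_zero, neg_zero, pow_zero, pow_one, one_mul, mul_one,
      mul_inv_rev, inv_inv, hri, mul_assoc, hr1, hr, mul_inv_cancel_left, inv_mul_cancel_left]
  · simp only [va, vb, zpow_zero, neg_zero, pow_zero, pow_one, one_mul, mul_one,
      mul_inv_rev, inv_inv, hri, mul_assoc, hr1, hr, mul_inv_cancel_left, inv_mul_cancel_left]
  · simp only [va, vb, zpow_zero, zpow_one, zpow_neg, neg_zero, pow_zero, pow_one, one_mul,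
      mul_one, mul_inv_rev, inv_inv, hri, mul_assoc, hr1, hr, mul_inv_cancel_left,
      inv_mul_cancel_left]
  · have h2 : ∀ x : VB n, x ^ (2 : ℤ) = x * x := fun x => by
      rw [show (2 : ℤ) = 1 + 1 from rfl, zpow_add, zpow_one]
    simp only [va, vb, h2, zpow_zero, zpow_one, zpow_neg, neg_zero, pow_zero, pow_one,
      one_mul, mul_one, mul_inv_rev, inv_inv, hri, mul_assoc, hr1, hr, mul_inv_cancel_left,
      inv_mul_cancel_left]
  · have h2 : ∀ x : VB n, x ^ (1 + 1 : ℕ) = x * x := fun x => by rw [pow_succ, pow_one]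
    simp only [vf, h2, zpow_zero, neg_zero, pow_zero, pow_one, zero_add, one_mul, mul_one,
      mul_assoc, hr1, hr]
  · have h2 : ∀ x : VB n, x ^ (1 + 1 : ℕ) = x * x := fun x => by rw [pow_succ, pow_one]
    simp only [vf, h2, zpow_zero, neg_zero, pow_zero, pow_one, zero_add, one_mul, mul_one,
      mul_assoc, hr1, hr]
  · have h2 : ∀ x : VB n, x ^ (1 + 1 : ℕ) = x * x := fun x => by rw [pow_succ, pow_one]
    simp only [va, vf, h2, zpow_zero, zpow_one, zpow_neg, neg_zero, pow_zero, pow_one,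
      zero_add, one_mul, mul_one, mul_inv_rev, inv_inv, hri, mul_assoc, hr1, hr,
      mul_inv_cancel_left, inv_mul_cancel_left]
  · have h2 : ∀ x : VB n, x ^ (1 + 1 : ℕ) = x * x := fun x => by rw [pow_succ, pow_one]
    simp only [va, vf, h2, zpow_zero, zpow_one, zpow_neg, neg_zero, pow_zero, pow_one,
      zero_add, one_mul, mul_one, mul_inv_rev, inv_inv, hri, mul_assoc, hr1, hr,
      mul_inv_cancel_left, inv_mul_cancel_left]
  · intro h4 l h3 hl
    have hcs : vρ n 1 * vσ n l = vσ n l * vρ n 1 := (vσl_ρ1_comm h3 hl).symm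
    have hcs1 : ∀ x : VB n, vρ n 1 * (vσ n l * x) = vσ n l * (vρ n 1 * x) := by
      intro x; rw [← mul_assoc, hcs, mul_assoc]
    have hcr : vρ n 1 * vρ n l = vρ n l * vρ n 1 := vρ1_ρl_comm h3 hl
    have hcr1 : ∀ x : VB n, vρ n 1 * (vρ n l * x) = vρ n l * (vρ n 1 * x) := by
      intro x; rw [← mul_assoc, hcr, mul_assoc]
    refine ⟨?_, ?_, ?_⟩
    · simp only [va, vc, zpow_zero, neg_zero, one_mul, mul_one, mul_inv_rev, inv_inv, hri,
        mul_assoc, hcs1, hcs, hr1, hr, mul_inv_cancel_left, inv_mul_cancel_left]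
    · simp only [va, vg, zpow_zero, neg_zero, one_mul, mul_one, mul_inv_rev, inv_inv, hri,
        mul_assoc, hcr1, hcr, hr1, hr, mul_inv_cancel_left, inv_mul_cancel_left]
    · simp only [va, vg, zpow_zero, zpow_one, zpow_neg, neg_zero, one_mul, mul_one,
        mul_inv_rev, inv_inv, hri, mul_assoc, hcr1, hcr, hr1, hr, mul_inv_cancel_left,
        inv_mul_cancel_left]
end

section
/- Let n ≥ 3. In the welded braid group WB_n the following identities hold among the images of the listed elements: ρ_1 a_1 ρ_1 = a_0 a_1^{−1} a_0^{−1}; ρ_1 f_{2,1} ρ_1 = a_0 a_1 f_{2,0} a_1^{−1} a_0^{−1}; and, when n ≥ 4, for every l with 3 ≤ l ≤ n−1, ρ_1 g_{2,l} ρ_1 = a_0 a_1 g_{2,l} a_1^{−1} a_0^{−1}. -/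
lemma relOne {α : Type*} (rels : Set (FreeGroup α)) {r : FreeGroup α} (hr : r ∈ rels) :
    PresentedGroup.mk rels r = 1 :=
  (QuotientGroup.eq_one_iff r).mpr (Subgroup.subset_normalClosure hr)

lemma helper1 {G : Type*} [Group G] (s p : G) (hp : p * p = 1) :
    p * (s ^ (1:ℤ) * (p * s * p * s⁻¹) * s ^ (-1:ℤ)) * p =
    s ^ (0:ℤ) * (p * s * p * s⁻¹) * s ^ (-0:ℤ) *
      (s ^ (1:ℤ) * (p * s * p * s⁻¹) * s ^ (-1:ℤ))⁻¹ *
      (s ^ (0:ℤ) * (p * s * p * s⁻¹) * s ^ (-0:ℤ))⁻¹ := by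
  have hpi : p⁻¹ = p := inv_eq_of_mul_eq_one_right hp
  have P : ∀ x : G, p * (p * x) = x := fun x => by rw [← mul_assoc, hp, one_mul]
  have S : ∀ x : G, s * (s⁻¹ * x) = x := fun x => by rw [← mul_assoc, mul_inv_cancel, one_mul]
  have S' : ∀ x : G, s⁻¹ * (s * x) = x := fun x => by rw [← mul_assoc, inv_mul_cancel, one_mul]
  simp [mul_assoc, hpi, P, S, S', hp]

lemma helper2 {G : Type*} [Group G] (s p q : G) (hp : p * p = 1) :
    p * (s ^ (2:ℤ) * (p ^ 1 * q * p ^ (1+1)) * s ^ (-2:ℤ)) * p =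
    s ^ (0:ℤ) * (p * s * p * s⁻¹) * s ^ (-0:ℤ) *
      (s ^ (1:ℤ) * (p * s * p * s⁻¹) * s ^ (-1:ℤ)) *
      (s ^ (2:ℤ) * (p ^ 0 * q * p ^ (0+1)) * s ^ (-2:ℤ)) *
      (s ^ (1:ℤ) * (p * s * p * s⁻¹) * s ^ (-1:ℤ))⁻¹ *
      (s ^ (0:ℤ) * (p * s * p * s⁻¹) * s ^ (-0:ℤ))⁻¹ := by
  have hpi : p⁻¹ = p := inv_eq_of_mul_eq_one_right hp
  have P : ∀ x : G, p * (p * x) = x := fun x => by rw [← mul_assoc, hp, one_mul]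
  have S : ∀ x : G, s * (s⁻¹ * x) = x := fun x => by rw [← mul_assoc, mul_inv_cancel, one_mul]
  have S' : ∀ x : G, s⁻¹ * (s * x) = x := fun x => by rw [← mul_assoc, inv_mul_cancel, one_mul]
  have h2 : s ^ (2:ℤ) = s * s := by rw [show (2:ℤ)=1+1 from rfl, zpow_add, zpow_one]
  have h2' : s ^ (-2:ℤ) = s⁻¹ * s⁻¹ := by rw [show (-2:ℤ)=(-1)+(-1) from rfl, zpow_add, zpow_neg_one]
  simp [h2, h2', pow_succ, mul_assoc, hpi, P, S, S', hp]

lemma helper3 {G : Type*} [Group G] (s p r : G) (hp : p * p = 1) (hr : p * r = r * p) :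
    p * (s ^ (2:ℤ) * (r * p) * s ^ (-2:ℤ)) * p =
    s ^ (0:ℤ) * (p * s * p * s⁻¹) * s ^ (-0:ℤ) *
      (s ^ (1:ℤ) * (p * s * p * s⁻¹) * s ^ (-1:ℤ)) *
      (s ^ (2:ℤ) * (r * p) * s ^ (-2:ℤ)) *
      (s ^ (1:ℤ) * (p * s * p * s⁻¹) * s ^ (-1:ℤ))⁻¹ *
      (s ^ (0:ℤ) * (p * s * p * s⁻¹) * s ^ (-0:ℤ))⁻¹ := by
  have hpi : p⁻¹ = p := inv_eq_of_mul_eq_one_right hp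
  have P : ∀ x : G, p * (p * x) = x := fun x => by rw [← mul_assoc, hp, one_mul]
  have S : ∀ x : G, s * (s⁻¹ * x) = x := fun x => by rw [← mul_assoc, mul_inv_cancel, one_mul]
  have S' : ∀ x : G, s⁻¹ * (s * x) = x := fun x => by rw [← mul_assoc, inv_mul_cancel, one_mul]
  have R : ∀ x : G, r * (p * x) = p * (r * x) := fun x => by rw [← mul_assoc, ← hr, mul_assoc]
  have h2 : s ^ (2:ℤ) = s * s := by rw [show (2:ℤ)=1+1 from rfl, zpow_add, zpow_one]
  have h2' : s ^ (-2:ℤ) = s⁻¹ * s⁻¹ := by rw [show (-2:ℤ)=(-1)+(-1) from rfl, zpow_add, zpow_neg_one]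
  simp [h2, h2', mul_assoc, hpi, P, S, S', hp, R]

/-- the conjugation rules of Lemma 5.1 in `WB_n`, `n ≥ 3`. -/
theorem WB_conjugation_rules (n : ℕ) (hn : 3 ≤ n) :
    wρ n 1 * wa n 1 * wρ n 1 = wa n 0 * (wa n 1)⁻¹ * (wa n 0)⁻¹ ∧
    wρ n 1 * wf n 2 1 * wρ n 1 = wa n 0 * wa n 1 * wf n 2 0 * (wa n 1)⁻¹ * (wa n 0)⁻¹ ∧
    (4 ≤ n → ∀ l : ℕ, 3 ≤ l → l ≤ n - 1 →
      wρ n 1 * wg n 2 l * wρ n 1 = wa n 0 * wa n 1 * wg n 2 l * (wa n 1)⁻¹ * (wa n 0)⁻¹) := by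
  have hn1 : 1 ≤ n - 1 := by omega
  have hp : wρ n 1 * wρ n 1 = 1 := by
    show PresentedGroup.mk (wbRels n) (fρ n 1) * PresentedGroup.mk (wbRels n) (fρ n 1) = 1
    rw [← map_mul]
    exact relOne _ (Or.inl (Or.inr ⟨1, le_refl 1, hn1, rfl⟩))
  refine ⟨?_, ?_, ?_⟩
  · unfold wa
    exact helper1 _ _ hp
  · unfold wf wa
    exact helper2 _ _ _ hp
  · intro _ l hl3 hln
    have hc : wρ n 1 * wρ n l = wρ n l * wρ n 1 := by
      have h1 : wρ n 1 * wρ n l * (wρ n 1)⁻¹ * (wρ n l)⁻¹ = 1 := by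
        show PresentedGroup.mk (wbRels n) (fρ n 1) * PresentedGroup.mk (wbRels n) (fρ n l) *
          (PresentedGroup.mk (wbRels n) (fρ n 1))⁻¹ * (PresentedGroup.mk (wbRels n) (fρ n l))⁻¹ = 1
        rw [← map_inv, ← map_inv, ← map_mul, ← map_mul, ← map_mul]
        exact relOne _ (Or.inl (Or.inl (Or.inl
          ⟨1, l, le_refl 1, by omega, hln, Or.inr (Or.inl rfl)⟩)))
      rw [mul_assoc, ← mul_inv_rev, mul_inv_eq_one] at h1
      exact h1
    unfold wg wa
    exact helper3 _ _ _ hp hc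
end
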